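/- Let Q = ∏_{k=1}^n [−R_k, R_k] ⊂ ℝⁿ be a compact cuboid with R_k > 0, let H be a C¹ function on an open neighborhood of Q, and let α, β¹, …, βⁿ ∈ ℝ∖{0}. For real numbers a₁,…,aₙ ∈ ℝ∖{0} and M ∈ ℕ put F(t) := Σ_{l=0}^{M} 2^{iαlt} (H·χ_Q)(2^{β¹l}a₁, …, 2^{βⁿl}aₙ). Then there is a constant C depending on Q and the numbers α and β^k, but not on H, the a_k, M and t, such that |F(t)| ≤ C·‖H‖_{C¹(Q)}/|2^{iαt} − 1| for all t ∈ ℝ, all a₁,…,aₙ ∈ ℝ∖{0} and all M ∈ ℕ. -/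

import Mathlib

noncomputable section
open Finset

lemma geomPart (b A R : ℝ) (hb0 : 0 < b) (hb1 : b ≠ 1) (hA : 0 < A) (hR : 0 ≤ R) (M : ℕ) :
    ∑ l ∈ range M, (if b ^ l * A ≤ R ∧ b ^ (l+1) * A ≤ R then |b ^ (l+1) - b ^ l| * A else 0)
      ≤ R := by
  classical
  rw [← Finset.sum_filter]
  set s := (range M).filter (fun l => b ^ l * A ≤ R ∧ b ^ (l+1) * A ≤ R) with hs
  rcases s.eq_empty_or_nonempty with h | h
  · simp [h, hR]
  rcases lt_or_gt_of_ne hb1 with hblt | hbgt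
  · set L := s.min' h with hL
    have hLmem := s.min'_mem h
    have hLp : b ^ L * A ≤ R := (Finset.mem_filter.mp hLmem).2.1
    have hsub : s ⊆ Finset.Ico L M := by
      intro l hl
      exact Finset.mem_Ico.mpr ⟨s.min'_le l hl, Finset.mem_range.mp (Finset.mem_filter.mp hl).1⟩
    have hterm : ∀ l : ℕ, |b ^ (l+1) - b ^ l| * A = ((1 - b) * A) * b ^ l := by
      intro l
      have h1 : b ^ (l+1) ≤ b ^ l := pow_le_pow_of_le_one hb0.le hblt.le (by omega)
      rw [abs_of_nonpos (by linarith), pow_succ]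
      ring
    calc ∑ l ∈ s, |b ^ (l+1) - b ^ l| * A
        ≤ ∑ l ∈ Finset.Ico L M, |b ^ (l+1) - b ^ l| * A :=
          Finset.sum_le_sum_of_subset_of_nonneg hsub (fun _ _ _ => by positivity)
      _ = ((1 - b) * A) * ∑ l ∈ Finset.Ico L M, b ^ l := by
          rw [Finset.mul_sum]; exact Finset.sum_congr rfl fun l _ => hterm l
      _ ≤ R := by
          have hg : ∑ l ∈ Finset.Ico L M, b ^ l ≤ b ^ L * (1 / (1 - b)) := by
            rw [Finset.sum_Ico_eq_sum_range]
            have : ∀ i ∈ range (M - L), b ^ (L + i) = b ^ L * b ^ i := fun i _ => pow_add b L i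
            rw [Finset.sum_congr rfl this, ← Finset.mul_sum]
            have hgs : ∑ i ∈ range (M - L), b ^ i ≤ 1 / (1 - b) := by
              rw [geom_sum_eq (ne_of_lt hblt)]
              have hKnn : 0 ≤ b ^ (M - L) := pow_nonneg hb0.le _
              have heq : (b ^ (M - L) - 1) / (b - 1) = (1 - b ^ (M - L)) / (1 - b) := by
                rw [← neg_div_neg_eq]; ring_nf
              rw [heq]
              gcongr
              · linarith
            exact mul_le_mul_of_nonneg_left hgs (pow_nonneg hb0.le _)
          have h1b : 0 < 1 - b := by linarith
          calc ((1 - b) * A) * ∑ l ∈ Finset.Ico L M, b ^ l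
              ≤ ((1 - b) * A) * (b ^ L * (1 / (1 - b))) := by
                apply mul_le_mul_of_nonneg_left hg (by positivity)
            _ = b ^ L * A := by field_simp
            _ ≤ R := hLp
  · set L := s.max' h with hL
    have hLmem := s.max'_mem h
    have hLp : b ^ (L+1) * A ≤ R := (Finset.mem_filter.mp hLmem).2.2
    have hsub : s ⊆ range (L+1) := fun l hl =>
      Finset.mem_range.mpr (Nat.lt_succ_of_le (s.le_max' l hl))
    have hterm : ∀ l : ℕ, |b ^ (l+1) - b ^ l| * A = ((b - 1) * A) * b ^ l := by
      intro l
      have h1 : b ^ l ≤ b ^ (l+1) := pow_le_pow_right₀ hbgt.le (by omega)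
      rw [abs_of_nonneg (by linarith), pow_succ]
      ring
    calc ∑ l ∈ s, |b ^ (l+1) - b ^ l| * A
        ≤ ∑ l ∈ range (L+1), |b ^ (l+1) - b ^ l| * A :=
          Finset.sum_le_sum_of_subset_of_nonneg hsub (fun _ _ _ => by positivity)
      _ = ((b - 1) * A) * ∑ l ∈ range (L+1), b ^ l := by
          rw [Finset.mul_sum]; exact Finset.sum_congr rfl fun l _ => hterm l
      _ ≤ R := by
          rw [geom_sum_eq (ne_of_gt hbgt)]
          have hb1' : 0 < b - 1 := by linarith
          have heq : ((b - 1) * A) * ((b ^ (L+1) - 1) / (b - 1)) = A * (b ^ (L+1) - 1) := by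
            field_simp
          rw [heq]
          nlinarith [hLp]

lemma flipOut (b A R : ℝ) (hb0 : 0 < b) (hA : 0 < A) (M : ℕ) :
    ∑ l ∈ range M, (if b ^ l * A ≤ R ∧ R < b ^ (l+1) * A then (1:ℝ) else 0) ≤ 1 := by
  classical
  rw [← Finset.sum_filter, Finset.sum_const, nsmul_eq_mul, mul_one]
  have : ((range M).filter (fun l => b ^ l * A ≤ R ∧ R < b ^ (l+1) * A)).card ≤ 1 := by
    apply Finset.card_le_one.mpr
    intro l hl l' hl'
    obtain ⟨h1, h2⟩ := (Finset.mem_filter.mp hl).2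
    obtain ⟨h1', h2'⟩ := (Finset.mem_filter.mp hl').2
    have hll' : b ^ l < b ^ (l'+1) := lt_of_mul_lt_mul_right (lt_of_le_of_lt h1 h2') hA.le
    have hl'l : b ^ l' < b ^ (l+1) := lt_of_mul_lt_mul_right (lt_of_le_of_lt h1' h2) hA.le
    rcases lt_trichotomy b 1 with hb | hb | hb
    · have := (pow_lt_pow_iff_right_of_lt_one₀ hb0 hb).mp hll'
      have := (pow_lt_pow_iff_right_of_lt_one₀ hb0 hb).mp hl'l
      omega
    · subst hb; simp at hll'
    · have := (pow_lt_pow_iff_right₀ hb).mp hll'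
      have := (pow_lt_pow_iff_right₀ hb).mp hl'l
      omega
  exact_mod_cast this

lemma flipIn (b A R : ℝ) (hb0 : 0 < b) (hA : 0 < A) (M : ℕ) :
    ∑ l ∈ range M, (if b ^ (l+1) * A ≤ R ∧ R < b ^ l * A then (1:ℝ) else 0) ≤ 1 := by
  classical
  rw [← Finset.sum_filter, Finset.sum_const, nsmul_eq_mul, mul_one]
  have : ((range M).filter (fun l => b ^ (l+1) * A ≤ R ∧ R < b ^ l * A)).card ≤ 1 := by
    apply Finset.card_le_one.mpr
    intro l hl l' hl'
    obtain ⟨h1, h2⟩ := (Finset.mem_filter.mp hl).2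
    obtain ⟨h1', h2'⟩ := (Finset.mem_filter.mp hl').2
    have hll' : b ^ (l+1) < b ^ l' := lt_of_mul_lt_mul_right (lt_of_le_of_lt h1 h2') hA.le
    have hl'l : b ^ (l'+1) < b ^ l := lt_of_mul_lt_mul_right (lt_of_le_of_lt h1' h2) hA.le
    rcases lt_trichotomy b 1 with hb | hb | hb
    · have := (pow_lt_pow_iff_right_of_lt_one₀ hb0 hb).mp hll'
      have := (pow_lt_pow_iff_right_of_lt_one₀ hb0 hb).mp hl'l
      omega
    · subst hb; simp at hll'
    · have := (pow_lt_pow_iff_right₀ hb).mp hll'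
      have := (pow_lt_pow_iff_right₀ hb).mp hl'l
      omega
  exact_mod_cast this

lemma sumDiff (n : ℕ) (R : Fin n → ℝ) (hR : ∀ k, 0 < R k) (β : Fin n → ℝ) (hβ : ∀ k, β k ≠ 0)
    (H : (Fin n → ℝ) → ℝ) (S1 S2 : ℝ) (hS1n : 0 ≤ S1) (hS2n : 0 ≤ S2)
    (hS1 : ∀ x ∈ (Set.pi Set.univ fun k => Set.Icc (-(R k)) (R k)), |H x| ≤ S1)
    (hlip : ∀ x ∈ (Set.pi Set.univ fun k => Set.Icc (-(R k)) (R k)),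
      ∀ y ∈ (Set.pi Set.univ fun k => Set.Icc (-(R k)) (R k)), |H y - H x| ≤ S2 * ‖y - x‖)
    (a : Fin n → ℝ) (ha : ∀ k, a k ≠ 0) (M : ℕ) :
    (∑ l ∈ Finset.range M,
        |(Set.pi Set.univ fun k => Set.Icc (-(R k)) (R k)).indicator H
            (fun k => (2:ℝ) ^ (β k * (l:ℝ)) * a k)
          - (Set.pi Set.univ fun k => Set.Icc (-(R k)) (R k)).indicator H
            (fun k => (2:ℝ) ^ (β k * ((l+1:ℕ):ℝ)) * a k)|)
      ≤ S2 * (∑ k, R k) + S1 * (2 * n) := by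
  classical
  set Q : Set (Fin n → ℝ) := Set.pi Set.univ fun k => Set.Icc (-(R k)) (R k) with hQdef
  set b : Fin n → ℝ := fun k => (2:ℝ) ^ (β k) with hbdef
  have hb0 : ∀ k, 0 < b k := fun k => Real.rpow_pos_of_pos (by norm_num) _
  have hb1 : ∀ k, b k ≠ 1 := by
    intro k h
    apply hβ k
    have h2 := congrArg Real.log h
    rw [hbdef] at h2
    simp only [Real.log_rpow (by norm_num : (0:ℝ) < 2), Real.log_one] at h2
    exact (mul_eq_zero.mp h2).resolve_right (Real.log_pos (by norm_num)).ne'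
  have hA : ∀ k, 0 < |a k| := fun k => abs_pos.mpr (ha k)
  have hpow : ∀ (l : ℕ) (k : Fin n), (2:ℝ) ^ (β k * (l:ℝ)) = b k ^ l := by
    intro l k
    rw [hbdef, ← Real.rpow_natCast ((2:ℝ) ^ (β k)) l, ← Real.rpow_mul (by norm_num)]
  have hmem : ∀ (l : ℕ), ((fun k => (2:ℝ) ^ (β k * (l:ℝ)) * a k) ∈ Q)
      ↔ ∀ k, b k ^ l * |a k| ≤ R k := by
    intro l
    rw [hQdef, Set.mem_univ_pi]
    refine forall_congr' fun k => ?_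
    rw [Set.mem_Icc, ← abs_le, abs_mul, abs_of_pos (Real.rpow_pos_of_pos (by norm_num) _), hpow]
  have perl : ∀ l : ℕ,
      |Q.indicator H (fun k => (2:ℝ) ^ (β k * (l:ℝ)) * a k)
        - Q.indicator H (fun k => (2:ℝ) ^ (β k * ((l+1:ℕ):ℝ)) * a k)|
      ≤ S2 * (∑ k, if b k ^ l * |a k| ≤ R k ∧ b k ^ (l+1) * |a k| ≤ R k
              then |b k ^ (l+1) - b k ^ l| * |a k| else 0)
        + S1 * (∑ k, ((if b k ^ l * |a k| ≤ R k ∧ R k < b k ^ (l+1) * |a k| then (1:ℝ) else 0)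
              + (if b k ^ (l+1) * |a k| ≤ R k ∧ R k < b k ^ l * |a k| then (1:ℝ) else 0))) := by
    intro l
    have hd_nonneg : (0:ℝ) ≤ ∑ k, if b k ^ l * |a k| ≤ R k ∧ b k ^ (l+1) * |a k| ≤ R k
        then |b k ^ (l+1) - b k ^ l| * |a k| else 0 :=
      Finset.sum_nonneg fun k _ => by positivity
    have hf_nonneg : (0:ℝ) ≤ ∑ k,
        ((if b k ^ l * |a k| ≤ R k ∧ R k < b k ^ (l+1) * |a k| then (1:ℝ) else 0)
          + (if b k ^ (l+1) * |a k| ≤ R k ∧ R k < b k ^ l * |a k| then (1:ℝ) else 0)) :=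
      Finset.sum_nonneg fun k _ => by positivity
    by_cases h1 : (fun k => (2:ℝ) ^ (β k * (l:ℝ)) * a k) ∈ Q
    · by_cases h2 : (fun k => (2:ℝ) ^ (β k * ((l+1:ℕ):ℝ)) * a k) ∈ Q
      · rw [Set.indicator_of_mem h1, Set.indicator_of_mem h2]
        have hc : ∀ k, b k ^ l * |a k| ≤ R k ∧ b k ^ (l+1) * |a k| ≤ R k :=
          fun k => ⟨(hmem l).mp h1 k, by have := (hmem (l+1)).mp h2 k; exact_mod_cast this⟩
        have hlip' := hlip _ h2 _ h1
        have hnorm : ‖(fun k => (2:ℝ) ^ (β k * (l:ℝ)) * a k)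
            - (fun k => (2:ℝ) ^ (β k * ((l+1:ℕ):ℝ)) * a k)‖
            ≤ ∑ k, |b k ^ (l+1) - b k ^ l| * |a k| := by
          rw [pi_norm_le_iff_of_nonneg (Finset.sum_nonneg fun k _ => by positivity)]
          intro i
          have heq : ‖((fun k => (2:ℝ) ^ (β k * (l:ℝ)) * a k)
              - (fun k => (2:ℝ) ^ (β k * ((l+1:ℕ):ℝ)) * a k)) i‖
              = |b i ^ (l+1) - b i ^ l| * |a i| := by
            rw [Pi.sub_apply, Real.norm_eq_abs]
            simp only [hpow]
            rw [← sub_mul, abs_mul, abs_sub_comm]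
          rw [heq]
          exact Finset.single_le_sum (f := fun i => |b i ^ (l+1) - b i ^ l| * |a i|)
            (fun k _ => by positivity) (Finset.mem_univ i)
        have hsum_eq : (∑ k, if b k ^ l * |a k| ≤ R k ∧ b k ^ (l+1) * |a k| ≤ R k
              then |b k ^ (l+1) - b k ^ l| * |a k| else 0)
            = ∑ k, |b k ^ (l+1) - b k ^ l| * |a k| :=
          Finset.sum_congr rfl fun k _ => if_pos (hc k)
        have hmain := hlip'.trans (mul_le_mul_of_nonneg_left hnorm hS2n)
        rw [hsum_eq]
        nlinarith [mul_nonneg hS1n hf_nonneg]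
      · rw [Set.indicator_of_mem h1, Set.indicator_of_notMem h2, sub_zero]
        obtain ⟨k0, hk0⟩ : ∃ k, R k < b k ^ (l+1) * |a k| := by
          by_contra hcon
          push_neg at hcon
          exact h2 ((hmem (l+1)).mpr (by exact_mod_cast fun k => hcon k))
        have hk0' : b k0 ^ l * |a k0| ≤ R k0 := (hmem l).mp h1 k0
        have hfo : (if b k0 ^ l * |a k0| ≤ R k0 ∧ R k0 < b k0 ^ (l+1) * |a k0| then (1:ℝ) else 0)
            + (if b k0 ^ (l+1) * |a k0| ≤ R k0 ∧ R k0 < b k0 ^ l * |a k0| then (1:ℝ) else 0)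
            = 1 := by
          rw [if_pos ⟨hk0', hk0⟩, if_neg (by rintro ⟨hle, -⟩; linarith)]
          norm_num
        have hge1 : (1:ℝ) ≤ ∑ k,
            ((if b k ^ l * |a k| ≤ R k ∧ R k < b k ^ (l+1) * |a k| then (1:ℝ) else 0)
              + (if b k ^ (l+1) * |a k| ≤ R k ∧ R k < b k ^ l * |a k| then (1:ℝ) else 0)) := by
          refine le_trans (le_of_eq hfo.symm) ?_
          exact Finset.single_le_sum
            (f := fun k => (if b k ^ l * |a k| ≤ R k ∧ R k < b k ^ (l+1) * |a k| then (1:ℝ) else 0)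
              + (if b k ^ (l+1) * |a k| ≤ R k ∧ R k < b k ^ l * |a k| then (1:ℝ) else 0))
            (fun k _ => by positivity) (Finset.mem_univ k0)
        have hH1 := hS1 _ h1
        nlinarith [mul_nonneg hS2n hd_nonneg]
    · by_cases h2 : (fun k => (2:ℝ) ^ (β k * ((l+1:ℕ):ℝ)) * a k) ∈ Q
      · rw [Set.indicator_of_notMem h1, Set.indicator_of_mem h2, zero_sub, abs_neg]
        obtain ⟨k0, hk0⟩ : ∃ k, R k < b k ^ l * |a k| := by
          by_contra hcon
          push_neg at hcon
          exact h1 ((hmem l).mpr hcon)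
        have hk0' : b k0 ^ (l+1) * |a k0| ≤ R k0 := by
          have := (hmem (l+1)).mp h2 k0; exact_mod_cast this
        have hfo : (if b k0 ^ l * |a k0| ≤ R k0 ∧ R k0 < b k0 ^ (l+1) * |a k0| then (1:ℝ) else 0)
            + (if b k0 ^ (l+1) * |a k0| ≤ R k0 ∧ R k0 < b k0 ^ l * |a k0| then (1:ℝ) else 0)
            = 1 := by
          rw [if_neg (by rintro ⟨hle, -⟩; linarith), if_pos ⟨hk0', hk0⟩]
          norm_num
        have hge1 : (1:ℝ) ≤ ∑ k,
            ((if b k ^ l * |a k| ≤ R k ∧ R k < b k ^ (l+1) * |a k| then (1:ℝ) else 0)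
              + (if b k ^ (l+1) * |a k| ≤ R k ∧ R k < b k ^ l * |a k| then (1:ℝ) else 0)) := by
          refine le_trans (le_of_eq hfo.symm) ?_
          exact Finset.single_le_sum
            (f := fun k => (if b k ^ l * |a k| ≤ R k ∧ R k < b k ^ (l+1) * |a k| then (1:ℝ) else 0)
              + (if b k ^ (l+1) * |a k| ≤ R k ∧ R k < b k ^ l * |a k| then (1:ℝ) else 0))
            (fun k _ => by positivity) (Finset.mem_univ k0)
        have hH1 := hS1 _ h2
        nlinarith [mul_nonneg hS2n hd_nonneg]
      · rw [Set.indicator_of_notMem h1, Set.indicator_of_notMem h2, sub_zero, abs_zero]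
        exact add_nonneg (mul_nonneg hS2n hd_nonneg) (mul_nonneg hS1n hf_nonneg)
  refine le_trans (Finset.sum_le_sum fun l (_ : l ∈ range M) => perl l) ?_
  rw [Finset.sum_add_distrib, ← Finset.mul_sum, ← Finset.mul_sum]
  refine add_le_add (mul_le_mul_of_nonneg_left ?_ hS2n) (mul_le_mul_of_nonneg_left ?_ hS1n)
  · rw [Finset.sum_comm]
    exact Finset.sum_le_sum fun k _ =>
      geomPart (b k) |a k| (R k) (hb0 k) (hb1 k) (hA k) (hR k).le M
  · rw [Finset.sum_comm]
    calc ∑ k, ∑ l ∈ range M,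
          ((if b k ^ l * |a k| ≤ R k ∧ R k < b k ^ (l+1) * |a k| then (1:ℝ) else 0)
            + (if b k ^ (l+1) * |a k| ≤ R k ∧ R k < b k ^ l * |a k| then (1:ℝ) else 0))
        ≤ ∑ _k : Fin n, (2:ℝ) := by
          refine Finset.sum_le_sum fun k _ => ?_
          rw [Finset.sum_add_distrib]
          have h1 := flipOut (b k) |a k| (R k) (hb0 k) (hA k) M
          have h2 := flipIn (b k) |a k| (R k) (hb0 k) (hA k) M
          linarith
      _ = 2 * n := by
          simp [Finset.sum_const, Finset.card_univ, nsmul_eq_mul]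
          ring

lemma abel_sum' (e g : ℕ → ℂ) (q : ℂ) (he : ∀ l, e (l+1) = e l * q) (M : ℕ) :
    (∑ l ∈ Finset.range (M+1), e l * g l) * (q - 1)
      = (∑ l ∈ Finset.range M, e (l+1) * (g l - g (l+1))) + e (M+1) * g M - e 0 * g 0 := by
  induction M with
  | zero =>
      simp only [Finset.sum_range_one, Finset.sum_range_zero, zero_add]
      rw [he 0]; ring
  | succ M ih =>
      rw [Finset.sum_range_succ, add_mul, ih, Finset.sum_range_succ, he (M+1)]
      ring

lemma abel_norm (e g : ℕ → ℂ) (q : ℂ) (he : ∀ l, e (l+1) = e l * q)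
    (hen : ∀ l, ‖e l‖ = 1) (M : ℕ) :
    ‖∑ l ∈ Finset.range (M+1), e l * g l‖ * ‖q - 1‖
      ≤ (∑ l ∈ Finset.range M, ‖g l - g (l+1)‖) + ‖g M‖ + ‖g 0‖ := by
  rw [← norm_mul, abel_sum' e g q he M]
  have h1 : ‖((∑ l ∈ Finset.range M, e (l+1) * (g l - g (l+1))) + e (M+1) * g M) - e 0 * g 0‖
      ≤ ‖∑ l ∈ Finset.range M, e (l+1) * (g l - g (l+1))‖ + ‖e (M+1) * g M‖ + ‖e 0 * g 0‖ := by
    refine (norm_sub_le _ _).trans ?_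
    have := norm_add_le (∑ l ∈ Finset.range M, e (l+1) * (g l - g (l+1))) (e (M+1) * g M)
    linarith
  refine h1.trans ?_
  have h2 : ‖∑ l ∈ Finset.range M, e (l+1) * (g l - g (l+1))‖
      ≤ ∑ l ∈ Finset.range M, ‖g l - g (l+1)‖ := by
    refine (norm_sum_le _ _).trans ?_
    refine Finset.sum_le_sum fun l _ => ?_
    rw [norm_mul, hen (l+1), one_mul]
  have h3 : ‖e (M+1) * g M‖ = ‖g M‖ := by rw [norm_mul, hen (M+1), one_mul]
  have h4 : ‖e 0 * g 0‖ = ‖g 0‖ := by rw [norm_mul, hen 0, one_mul]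
  linarith

lemma enorm' (θ : ℝ) : ‖(2:ℂ) ^ (Complex.I * (θ:ℂ))‖ = 1 := by
  have h2 : (2:ℂ) = ((2:ℝ):ℂ) := by norm_num
  rw [h2, Complex.norm_cpow_eq_rpow_re_of_pos (by norm_num)]
  simp

lemma esucc' (α t : ℝ) (l : ℕ) :
    (2:ℂ) ^ (Complex.I * ((α * ((l+1 : ℕ) : ℝ) * t : ℝ) : ℂ))
      = (2:ℂ) ^ (Complex.I * ((α * (l : ℝ) * t : ℝ) : ℂ))
        * (2:ℂ) ^ (Complex.I * ((α * t : ℝ) : ℂ)) := by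
  rw [← Complex.cpow_add _ _ (by norm_num : (2:ℂ) ≠ 0)]
  congr 1
  rw [← mul_add]
  congr 1
  push_cast
  ring


/-- Lemma 7.2: bound for oscillatory sums
`F(t) = Σ_{l=0}^M 2^{iαlt} (Hχ_Q)(2^{β¹l}a₁,…,2^{βⁿl}aₙ)` by
`C ‖H‖_{C¹(Q)} / |2^{iαt} − 1|` (stated in multiplied-out form). -/
theorem statement15 (n : ℕ) (R : Fin n → ℝ) (hR : ∀ k, 0 < R k)
    (α : ℝ) (hα : α ≠ 0) (β : Fin n → ℝ) (hβ : ∀ k, β k ≠ 0) :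
    ∃ C : ℝ, 0 < C ∧
      ∀ H : (Fin n → ℝ) → ℝ, ∀ U : Set (Fin n → ℝ), IsOpen U →
        (Set.pi Set.univ fun k => Set.Icc (-(R k)) (R k)) ⊆ U → ContDiffOn ℝ 1 H U →
        ∀ a : Fin n → ℝ, (∀ k, a k ≠ 0) → ∀ M : ℕ, ∀ t : ℝ,
          ‖∑ l ∈ Finset.range (M + 1),
                (2 : ℂ) ^ (Complex.I * ((α * (l : ℝ) * t : ℝ) : ℂ)) *
                  (((Set.pi Set.univ fun k => Set.Icc (-(R k)) (R k)).indicator H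
                      (fun k => (2 : ℝ) ^ (β k * (l : ℝ)) * a k) : ℝ) : ℂ)‖ *
              ‖(2 : ℂ) ^ (Complex.I * ((α * t : ℝ) : ℂ)) - 1‖ ≤
            C * ((⨆ x ∈ (Set.pi Set.univ fun k => Set.Icc (-(R k)) (R k)), |H x|) +
              ⨆ x ∈ (Set.pi Set.univ fun k => Set.Icc (-(R k)) (R k)), ‖fderiv ℝ H x‖) := by
  classical
  have hsum_nonneg : (0:ℝ) ≤ ∑ k, R k := Finset.sum_nonneg fun k _ => (hR k).le
  have hn2 : (0:ℝ) ≤ 2 * (n:ℝ) := by positivity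
  refine ⟨(∑ k, R k) + 2 * n + 3, by linarith, ?_⟩
  intro H U hU hQU hH a ha M t
  set Q : Set (Fin n → ℝ) := Set.pi Set.univ fun k => Set.Icc (-(R k)) (R k) with hQdef
  set S1 : ℝ := ⨆ x ∈ Q, |H x| with hS1def
  set S2 : ℝ := ⨆ x ∈ Q, ‖fderiv ℝ H x‖ with hS2def
  have hQcomp : IsCompact Q := isCompact_univ_pi fun k => isCompact_Icc
  have hQcvx : Convex ℝ Q := convex_pi fun k _ => convex_Icc _ _
  have hQ0 : (0 : Fin n → ℝ) ∈ Q := by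
    rw [hQdef, Set.mem_univ_pi]
    intro k
    simp only [Pi.zero_apply, Set.mem_Icc]
    exact ⟨by linarith [hR k], (hR k).le⟩
  have hHcont : ContinuousOn H Q := (hH.continuousOn).mono hQU
  obtain ⟨B1, hB1⟩ := hQcomp.exists_bound_of_continuousOn hHcont
  have hfcont : ContinuousOn (fun x => fderiv ℝ H x) Q :=
    (hH.continuousOn_fderiv_of_isOpen hU le_rfl).mono hQU
  obtain ⟨B2, hB2⟩ := hQcomp.exists_bound_of_continuousOn hfcont
  have hbdd1 : BddAbove (Set.range fun x => ⨆ _ : x ∈ Q, |H x|) := by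
    refine ⟨max B1 0, ?_⟩
    rintro v ⟨x, rfl⟩
    show (⨆ _ : x ∈ Q, |H x|) ≤ max B1 0
    by_cases hx : x ∈ Q
    · rw [ciSup_pos hx]
      exact le_max_of_le_left (by simpa [Real.norm_eq_abs] using hB1 x hx)
    · haveI : IsEmpty (x ∈ Q) := ⟨hx⟩
      rw [Real.iSup_of_isEmpty]
      exact le_max_right _ _
  have hbdd2 : BddAbove (Set.range fun x => ⨆ _ : x ∈ Q, ‖fderiv ℝ H x‖) := by
    refine ⟨max B2 0, ?_⟩
    rintro v ⟨x, rfl⟩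
    show (⨆ _ : x ∈ Q, ‖fderiv ℝ H x‖) ≤ max B2 0
    by_cases hx : x ∈ Q
    · rw [ciSup_pos hx]
      exact le_max_of_le_left (hB2 x hx)
    · haveI : IsEmpty (x ∈ Q) := ⟨hx⟩
      rw [Real.iSup_of_isEmpty]
      exact le_max_right _ _
  have hS1 : ∀ x ∈ Q, |H x| ≤ S1 := by
    intro x hx
    rw [hS1def]
    exact le_trans (le_of_eq (ciSup_pos (f := fun _ : x ∈ Q => |H x|) hx).symm) (le_ciSup hbdd1 x)
  have hS2 : ∀ x ∈ Q, ‖fderiv ℝ H x‖ ≤ S2 := by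
    intro x hx
    rw [hS2def]
    exact le_trans (le_of_eq (ciSup_pos (f := fun _ : x ∈ Q => ‖fderiv ℝ H x‖) hx).symm) (le_ciSup hbdd2 x)
  have hS1n : 0 ≤ S1 := le_trans (abs_nonneg _) (hS1 _ hQ0)
  have hS2n : 0 ≤ S2 := le_trans (norm_nonneg _) (hS2 _ hQ0)
  have hdiffQ : ∀ z ∈ Q, DifferentiableAt ℝ H z := fun z hz =>
    (hH.differentiableOn one_ne_zero).differentiableAt (hU.mem_nhds (hQU hz))
  have hlip : ∀ x ∈ Q, ∀ y ∈ Q, |H y - H x| ≤ S2 * ‖y - x‖ := by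
    intro x hx y hy
    have := hQcvx.norm_image_sub_le_of_norm_fderiv_le hdiffQ hS2 hx hy
    simpa [Real.norm_eq_abs] using this
  have key := abel_norm
    (fun l => (2:ℂ) ^ (Complex.I * ((α * (l:ℝ) * t : ℝ) : ℂ)))
    (fun l => ((Q.indicator H (fun k => (2:ℝ) ^ (β k * (l:ℝ)) * a k) : ℝ) : ℂ))
    ((2:ℂ) ^ (Complex.I * ((α * t : ℝ) : ℂ)))
    (fun l => esucc' α t l) (fun l => enorm' _) M
  refine le_trans key ?_
  have hcnorm : ∀ r s : ℝ, ‖(r:ℂ) - (s:ℂ)‖ = |r - s| := fun r s => by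
    rw [← Complex.ofReal_sub, Complex.norm_real, Real.norm_eq_abs]
  have hcnorm1 : ∀ r : ℝ, ‖(r:ℂ)‖ = |r| := fun r => by
    rw [Complex.norm_real, Real.norm_eq_abs]
  simp only [hcnorm, hcnorm1]
  have hind : ∀ l : ℕ, |Q.indicator H (fun k => (2:ℝ) ^ (β k * (l:ℝ)) * a k)| ≤ S1 := by
    intro l
    by_cases hx : (fun k => (2:ℝ) ^ (β k * (l:ℝ)) * a k) ∈ Q
    · rw [Set.indicator_of_mem hx]; exact hS1 _ hx
    · rw [Set.indicator_of_notMem hx, abs_zero]; exact hS1n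
  have hsd := sumDiff n R hR β hβ H S1 S2 hS1n hS2n hS1 hlip a ha M
  have h1 : (∑ l ∈ Finset.range M,
        |Q.indicator H (fun k => (2:ℝ) ^ (β k * (l:ℝ)) * a k)
          - Q.indicator H (fun k => (2:ℝ) ^ (β k * ((l+1:ℕ):ℝ)) * a k)|)
      + |Q.indicator H (fun k => (2:ℝ) ^ (β k * ((M:ℕ):ℝ)) * a k)|
      + |Q.indicator H (fun k => (2:ℝ) ^ (β k * ((0:ℕ):ℝ)) * a k)|
      ≤ (S2 * (∑ k, R k) + S1 * (2 * n)) + S1 + S1 := by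
    have := hind M
    have := hind 0
    gcongr <;> assumption
  refine le_trans h1 ?_
  nlinarith [mul_nonneg hS1n hsum_nonneg, mul_nonneg hS2n hn2]
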